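/- For every integer k, L(2k+1)/(F(2k+1)² + 1) = L(2k)/(F(2k)² + 1) − L(2k+2)/(F(2k+2)² + 1), as an identity of rational numbers (all denominators are positive). -/

import Mathlib

lemma fib_key (F L : ℤ → ℤ)
    (hF0 : F 0 = 0) (hF1 : F 1 = 1) (hF' : ∀ n : ℤ, F (n + 2) = F (n + 1) + F n)
    (hL0 : L 0 = 2) (hL1 : L 1 = 1) (hL' : ∀ n : ℤ, L (n + 2) = L (n + 1) + L n) :
    ∀ k : ℤ, F (2 * k + 1) ^ 2 - F (2 * k + 1) * F (2 * k) - F (2 * k) ^ 2 = 1 ∧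
      L (2 * k) = 2 * F (2 * k + 1) - F (2 * k) ∧
      L (2 * k + 1) = 2 * F (2 * k) + F (2 * k + 1) := by
  intro k
  induction k using Int.induction_on with
  | zero => norm_num [hF0, hF1, hL0, hL1]
  | succ i ih =>
    obtain ⟨h1, h2, h3⟩ := ih
    have e1 : F (2 * i + 2) = F (2 * i + 1) + F (2 * i) := hF' (2 * i)
    have e2 : F (2 * i + 3) = F (2 * i + 2) + F (2 * i + 1) := by
      have := hF' (2 * i + 1)
      rw [show 2 * (i:ℤ) + 1 + 2 = 2 * i + 3 from by ring,
        show 2 * (i:ℤ) + 1 + 1 = 2 * i + 2 from by ring] at this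
      exact this
    have e3 : L (2 * i + 2) = L (2 * i + 1) + L (2 * i) := hL' (2 * i)
    have e4 : L (2 * i + 3) = L (2 * i + 2) + L (2 * i + 1) := by
      have := hL' (2 * i + 1)
      rw [show 2 * (i:ℤ) + 1 + 2 = 2 * i + 3 from by ring,
        show 2 * (i:ℤ) + 1 + 1 = 2 * i + 2 from by ring] at this
      exact this
    have a1 : 2 * ((i : ℤ) + 1) + 1 = 2 * i + 3 := by ring
    have a2 : 2 * ((i : ℤ) + 1) = 2 * i + 2 := by ring
    rw [a1, a2]
    refine ⟨?_, ?_, ?_⟩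
    · rw [e2, e1]; linear_combination h1
    · rw [e3, e2, e1, h2, h3]; ring
    · rw [e4, e3, e2, e1, h2, h3]; ring
  | pred i ih =>
    obtain ⟨h1, h2, h3⟩ := ih
    have e1 : F (-(2 * i) + 1) = F (-(2 * i)) + F (-(2 * i) - 1) := by
      have := hF' (-(2 * i) - 1)
      have ha : -(2 * (i:ℤ)) - 1 + 2 = -(2 * i) + 1 := by ring
      have hb : -(2 * (i:ℤ)) - 1 + 1 = -(2 * i) := by ring
      rw [ha, hb] at this; exact this
    have e2 : F (-(2 * i)) = F (-(2 * i) - 1) + F (-(2 * i) - 2) := by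
      have := hF' (-(2 * i) - 2)
      have ha : -(2 * (i:ℤ)) - 2 + 2 = -(2 * i) := by ring
      have hb : -(2 * (i:ℤ)) - 2 + 1 = -(2 * i) - 1 := by ring
      rw [ha, hb] at this; exact this
    have e3 : L (-(2 * i) + 1) = L (-(2 * i)) + L (-(2 * i) - 1) := by
      have := hL' (-(2 * i) - 1)
      have ha : -(2 * (i:ℤ)) - 1 + 2 = -(2 * i) + 1 := by ring
      have hb : -(2 * (i:ℤ)) - 1 + 1 = -(2 * i) := by ring
      rw [ha, hb] at this; exact this
    have e4 : L (-(2 * i)) = L (-(2 * i) - 1) + L (-(2 * i) - 2) := by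
      have := hL' (-(2 * i) - 2)
      have ha : -(2 * (i:ℤ)) - 2 + 2 = -(2 * i) := by ring
      have hb : -(2 * (i:ℤ)) - 2 + 1 = -(2 * i) - 1 := by ring
      rw [ha, hb] at this; exact this
    have b1 : 2 * (-(i : ℤ) - 1) + 1 = -(2 * i) - 1 := by ring
    have b2 : 2 * (-(i : ℤ) - 1) = -(2 * i) - 2 := by ring
    have c1 : 2 * (-(i : ℤ)) + 1 = -(2 * i) + 1 := by ring
    have c2 : 2 * (-(i : ℤ)) = -(2 * i) := by ring
    rw [c1, c2] at h1 h2 h3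
    rw [b1, b2]
    have f1 : F (-(2 * i) - 1) = F (-(2 * i) + 1) - F (-(2 * i)) := by linarith
    have f2 : F (-(2 * i) - 2) = F (-(2 * i)) - F (-(2 * i) - 1) := by linarith
    have g1 : L (-(2 * i) - 1) = L (-(2 * i) + 1) - L (-(2 * i)) := by linarith
    have g2 : L (-(2 * i) - 2) = L (-(2 * i)) - L (-(2 * i) - 1) := by linarith
    refine ⟨?_, ?_, ?_⟩
    · rw [f2, f1]; linear_combination h1
    · rw [g2, g1, f2, f1, h2, h3]; ring
    · rw [g1, f2, f1, h2, h3]; ring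

/-- a rational identity relating Lucas and Fibonacci numbers. -/
theorem statement5 (F L : ℤ → ℤ)
    (hF0 : F 0 = 0) (hF1 : F 1 = 1) (hF : ∀ n : ℤ, F n = F (n - 1) + F (n - 2))
    (hL0 : L 0 = 2) (hL1 : L 1 = 1) (hL : ∀ n : ℤ, L n = L (n - 1) + L (n - 2))
    (k : ℤ) :
    (L (2 * k + 1) : ℚ) / ((F (2 * k + 1) : ℚ) ^ 2 + 1) =
      (L (2 * k) : ℚ) / ((F (2 * k) : ℚ) ^ 2 + 1)
        - (L (2 * k + 2) : ℚ) / ((F (2 * k + 2) : ℚ) ^ 2 + 1) := by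
  have hF' : ∀ n : ℤ, F (n + 2) = F (n + 1) + F n := by
    intro n
    have := hF (n + 2)
    have ha : n + 2 - 1 = n + 1 := by ring
    have hb : n + 2 - 2 = n := by ring
    rw [ha, hb] at this; exact this
  have hL' : ∀ n : ℤ, L (n + 2) = L (n + 1) + L n := by
    intro n
    have := hL (n + 2)
    have ha : n + 2 - 1 = n + 1 := by ring
    have hb : n + 2 - 2 = n := by ring
    rw [ha, hb] at this; exact this
  obtain ⟨h1, h2, h3⟩ := fib_key F L hF0 hF1 hF' hL0 hL1 hL' k
  have e1 : F (2 * k + 2) = F (2 * k + 1) + F (2 * k) := hF' (2 * k)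
  have e3 : L (2 * k + 2) = L (2 * k + 1) + L (2 * k) := hL' (2 * k)
  set a : ℚ := (F (2 * k) : ℚ) with ha
  set b : ℚ := (F (2 * k + 1) : ℚ) with hb
  have h1' : b ^ 2 - b * a - a ^ 2 = 1 := by
    rw [ha, hb]; exact_mod_cast h1
  have h2' : (L (2 * k) : ℚ) = 2 * b - a := by rw [ha, hb]; exact_mod_cast h2
  have h3' : (L (2 * k + 1) : ℚ) = 2 * a + b := by rw [ha, hb]; exact_mod_cast h3
  have e1' : (F (2 * k + 2) : ℚ) = b + a := by rw [ha, hb]; exact_mod_cast e1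
  have e3' : (L (2 * k + 2) : ℚ) = (2 * a + b) + (2 * b - a) := by
    rw [← h2', ← h3']; exact_mod_cast e3
  rw [h2', h3', e1', e3']
  have d1 : b ^ 2 + 1 ≠ 0 := by positivity
  have d2 : a ^ 2 + 1 ≠ 0 := by positivity
  have d3 : (b + a) ^ 2 + 1 ≠ 0 := by positivity
  field_simp
  linear_combination (-2*b^3 - 5*a*b^2 - 3*a^2*b - 2*b - 2*a^3 - 4*a) * h1'
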